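/- Let k be a positive integer, g₁₂ = gcd(k, binomial(k,2)) and g₁₂₃ = gcd(k, binomial(k,2), binomial(k,3)). Then 3·g₁₂₃/g₁₂ is an integer and gcd(3·g₁₂₃/g₁₂, g₁₂₃) = 1. -/
import Mathlib

lemma two_mul_choose_two (k : ℕ) : 2 * k.choose 2 = (k - 1) * k := by
  have h := Nat.descFactorial_eq_factorial_mul_choose k 2
  simp [Nat.descFactorial_succ, Nat.factorial] at h
  omega

lemma six_mul_choose_three (k : ℕ) : 6 * k.choose 3 = (k - 2) * ((k - 1) * k) := by
  have h := Nat.descFactorial_eq_factorial_mul_choose k 3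
  simp [Nat.descFactorial_succ, Nat.factorial] at h
  omega

/-- For `k > 0`, with `g₁₂ = gcd(k, C(k,2))` and `g₁₂₃ = gcd(k, C(k,2), C(k,3))`,
the quantity `3·g₁₂₃/g₁₂` is an integer and `gcd(3·g₁₂₃/g₁₂, g₁₂₃) = 1`. -/
theorem three_g123_div_g12_unit (k : ℕ) (hk : 0 < k) :
    Nat.gcd k (k.choose 2) ∣ 3 * Nat.gcd (Nat.gcd k (k.choose 2)) (k.choose 3) ∧
    Nat.gcd (3 * Nat.gcd (Nat.gcd k (k.choose 2)) (k.choose 3) / Nat.gcd k (k.choose 2))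
      (Nat.gcd (Nat.gcd k (k.choose 2)) (k.choose 3)) = 1 := by
  set g := Nat.gcd k (k.choose 2) with hg
  set G := Nat.gcd g (k.choose 3) with hG
  have hgk : g ∣ k := Nat.gcd_dvd_left _ _
  have hgc2 : g ∣ k.choose 2 := Nat.gcd_dvd_right _ _
  have hGg : G ∣ g := Nat.gcd_dvd_left _ _
  have hGc3 : G ∣ k.choose 3 := Nat.gcd_dvd_right _ _
  have hgpos : 0 < g := Nat.gcd_pos_of_pos_left _ hk
  -- g ∣ 3 * C(k,3)
  have hdvd3c3 : g ∣ 3 * k.choose 3 := by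
    have h1 : 2 * (3 * k.choose 3) = (2 * k.choose 2) * (k - 2) := by
      rw [show 2 * (3 * k.choose 3) = 6 * k.choose 3 by ring, six_mul_choose_three,
        two_mul_choose_two]
      ring
    have h2 : 2 * g ∣ 2 * (3 * k.choose 3) := by
      rw [h1]
      exact Dvd.dvd.mul_right (Nat.mul_dvd_mul_left 2 hgc2) _
    exact (Nat.mul_dvd_mul_iff_left (by norm_num : 0 < 2)).mp h2
  have hpart1 : g ∣ 3 * G := by
    rw [hG, ← Nat.gcd_mul_left]
    exact Nat.dvd_gcd (dvd_mul_left g 3) hdvd3c3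
  refine ⟨hpart1, ?_⟩
  set d := 3 * G / g with hd
  have hdg : d * g = 3 * G := Nat.div_mul_cancel hpart1
  have hd3 : d ∣ 3 := by
    have hh : d * g ∣ 3 * g := by
      rw [hdg]
      exact Nat.mul_dvd_mul_left 3 hGg
    exact (Nat.mul_dvd_mul_iff_right hgpos).mp hh
  have hdle : d ≤ 3 := Nat.le_of_dvd (by norm_num) hd3
  interval_cases d
  · omega
  · exact Nat.gcd_one_left _
  · exact absurd hd3 (by norm_num)
  · -- d = 3 : then g = G, so g ∣ C(k,3). Show gcd 3 G = 1.
    have hgG : g = G := by omega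
    have hgc3 : g ∣ k.choose 3 := hgG ▸ hGc3
    by_contra hne
    have hp3 : Nat.Prime 3 := by norm_num
    have h3G : 3 ∣ G := by
      by_contra h3G
      exact hne ((hp3.coprime_iff_not_dvd).mpr h3G)
    have h3k : 3 ∣ k := h3G.trans (hGg.trans hgk)
    haveI : Fact (Nat.Prime 3) := ⟨hp3⟩
    set a := padicValNat 3 k with ha
    have hpa : 3 ^ a ∣ k := pow_padicValNat_dvd
    have hpa' : ¬ 3 ^ (a + 1) ∣ k :=
      pow_succ_padicValNat_not_dvd hk.ne'
    have hnd1 : ¬ 3 ∣ (k - 1) := by omega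
    have hnd2 : ¬ 3 ∣ (k - 2) := by omega
    have h3aC2 : 3 ^ a ∣ k.choose 2 := by
      have hdd : 3 ^ a ∣ k.choose 2 * 2 := by
        rw [Nat.mul_comm, two_mul_choose_two]
        exact hpa.mul_left _
      exact (Nat.Coprime.pow_left a (by norm_num)).dvd_of_dvd_mul_right hdd
    have h3ag : 3 ^ a ∣ g := Nat.dvd_gcd hpa h3aC2
    have h3aC3 : 3 ^ a ∣ k.choose 3 := h3ag.trans hgc3
    have h6 : 3 ^ (a + 1) ∣ 6 * k.choose 3 := by
      have : 3 ^ (a + 1) ∣ 3 * k.choose 3 := by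
        rw [pow_succ, Nat.mul_comm (3 ^ a) 3]
        exact Nat.mul_dvd_mul_left 3 h3aC3
      rw [show (6 : ℕ) * k.choose 3 = 2 * (3 * k.choose 3) by ring]
      exact this.mul_left 2
    rw [six_mul_choose_three] at h6
    have hcop : Nat.Coprime (3 ^ (a + 1)) ((k - 2) * (k - 1)) :=
      Nat.Coprime.pow_left _ (Nat.Coprime.mul_right
        ((hp3.coprime_iff_not_dvd).mpr hnd2) ((hp3.coprime_iff_not_dvd).mpr hnd1))
    have : 3 ^ (a + 1) ∣ k := by
      refine hcop.dvd_of_dvd_mul_left ?_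
      rw [Nat.mul_assoc]
      exact h6
    exact hpa' this
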